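/- Let (G, τ) be a Hausdorff separable SIN first-countable paratopological group. Then there exist a second-countable metrizable topological group H and a continuous bijective group homomorphism from G onto H. -/

import Mathlib

open Topology

open Filter Set Pointwise

section Aux

variable {G : Type*} [Group G] [TopologicalSpace G] [ContinuousMul G]

private lemma subset_mul_inv' {U : Set G} (hU : (1:G) ∈ U) : U ⊆ U * U⁻¹ := fun u hu =>
  ⟨u, hu, 1, by simpa using hU, by simp⟩

/-- The filter basis `{U * U⁻¹ : U ∈ 𝓝 1}` on a SIN paratopological group. -/
def sinBasis (hSIN : ∀ U ∈ 𝓝 (1 : G), ∃ V ∈ 𝓝 (1 : G), ∀ x : G, ∀ v ∈ V, x * v * x⁻¹ ∈ U) :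
    GroupFilterBasis G where
  sets := {s | ∃ U ∈ 𝓝 (1:G), s = U * U⁻¹}
  nonempty := ⟨Set.univ * Set.univ⁻¹, Set.univ, univ_mem, rfl⟩
  inter_sets := by
    rintro _ _ ⟨U, hU, rfl⟩ ⟨V, hV, rfl⟩
    refine ⟨(U ∩ V) * (U ∩ V)⁻¹, ⟨U ∩ V, inter_mem hU hV, rfl⟩, ?_⟩
    exact subset_inter
      (mul_subset_mul inter_subset_left (Set.inv_subset_inv.2 inter_subset_left))
      (mul_subset_mul inter_subset_right (Set.inv_subset_inv.2 inter_subset_right))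
  one' := by
    rintro _ ⟨U, hU, rfl⟩
    exact subset_mul_inv' (mem_of_mem_nhds hU) (mem_of_mem_nhds hU)
  mul' := by
    rintro _ ⟨U, hU, rfl⟩
    obtain ⟨W, hW, hWmul⟩ := exists_nhds_one_split hU
    obtain ⟨V, hV, hVconj⟩ := hSIN W hW
    refine ⟨(V ∩ W) * (V ∩ W)⁻¹, ⟨V ∩ W, inter_mem hV hW, rfl⟩, ?_⟩
    rintro _ ⟨_, ⟨a, ha, b', hb, rfl⟩, _, ⟨c, hc, d', hd, rfl⟩, rfl⟩
    rw [Set.mem_inv] at hb hd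
    refine ⟨a * (b' * c * b'⁻¹), hWmul _ ha.2 _ (hVconj b' c hc.1), b' * d', ?_, by group⟩
    rw [Set.mem_inv, mul_inv_rev]
    exact hWmul _ hd.2 _ hb.2
  inv' := by
    rintro _ ⟨U, hU, rfl⟩
    refine ⟨U * U⁻¹, ⟨U, hU, rfl⟩, ?_⟩
    rintro _ ⟨u, hu, v', hv, rfl⟩
    rw [Set.mem_inv] at hv
    exact ⟨v'⁻¹, hv, u⁻¹, by simpa using hu, by group⟩
  conj' := by
    intro x₀
    rintro _ ⟨U, hU, rfl⟩
    obtain ⟨V, hV, hVconj⟩ := hSIN U hU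
    refine ⟨V * V⁻¹, ⟨V, hV, rfl⟩, ?_⟩
    rintro _ ⟨v, hv, w', hw, rfl⟩
    rw [Set.mem_inv] at hw
    exact ⟨x₀ * v * x₀⁻¹, hVconj x₀ v hv, (x₀ * w'⁻¹ * x₀⁻¹)⁻¹,
      by rw [Set.mem_inv, inv_inv]; exact hVconj x₀ w'⁻¹ hw, by group⟩

variable (hSIN : ∀ U ∈ 𝓝 (1 : G), ∃ V ∈ 𝓝 (1 : G), ∀ x : G, ∀ v ∈ V, x * v * x⁻¹ ∈ U)

/-- The identity is continuous from the original topology to the SIN-basis topology. -/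
lemma sinBasis_continuous_id : @Continuous G G _ (sinBasis hSIN).topology id := by
  rw [continuous_def]
  intro s hs
  rw [Set.preimage_id]
  rw [isOpen_iff_mem_nhds]
  intro a ha
  have h := @isOpen_iff_mem_nhds G (sinBasis hSIN).topology _ |>.1 hs a ha
  obtain ⟨_, ⟨U, hU, rfl⟩, hsub⟩ := ((sinBasis hSIN).nhds_hasBasis a).mem_iff.1 h
  refine mem_of_superset ?_ (subset_trans (Set.image_mono (subset_mul_inv' (mem_of_mem_nhds hU))) hsub)
  have h2 : Filter.map (fun y => a * y) (𝓝 (1:G)) = 𝓝 a := by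
    simpa using (Homeomorph.mulLeft a).map_nhds_eq 1
  rw [← h2]
  exact image_mem_map hU

lemma sinBasis_t2 [T2Space G] : @T2Space G (sinBasis hSIN).topology := by
  have tg := (sinBasis hSIN).isTopologicalGroup
  refine @IsTopologicalGroup.t2Space_of_one_sep G (sinBasis hSIN).topology _
    tg ?_
  intro x hx
  obtain ⟨A, C, hA, hC, hxA, h1C, hAC⟩ := t2_separation hx
  have hW : (fun w => x * w) ⁻¹' A ∈ 𝓝 (1 : G) := by
    have : Filter.Tendsto (fun w => x * w) (𝓝 1) (𝓝 x) := by
      simpa using (continuous_mul_left x).tendsto (1 : G)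
    exact this (hA.mem_nhds hxA)
  set V : Set G := ((fun w => x * w) ⁻¹' A) ∩ C with hVdef
  have hV : V ∈ 𝓝 (1 : G) := inter_mem hW (hC.mem_nhds h1C)
  refine ⟨V * V⁻¹, (sinBasis hSIN).mem_nhds_one ⟨V, hV, rfl⟩, ?_⟩
  intro hmem
  obtain ⟨u, hu, v', hv, heq⟩ := hmem
  rw [Set.mem_inv] at hv
  have h1 : x * v'⁻¹ ∈ A := hv.1
  have h2 : x * v'⁻¹ = u := by rw [← heq]; group
  rw [h2] at h1
  exact hAC.le_bot ⟨h1, hu.2⟩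

lemma sinBasis_nhds_one_cg [FirstCountableTopology G] :
    (@nhds G (sinBasis hSIN).topology 1).IsCountablyGenerated := by
  obtain ⟨u, hu⟩ := (𝓝 (1:G)).exists_antitone_basis
  have hb : HasBasis (@nhds G (sinBasis hSIN).topology 1) (fun _ : ℕ => True)
      (fun n => u n * (u n)⁻¹) := by
    refine ((sinBasis hSIN).nhds_one_hasBasis).to_hasBasis ?_ ?_
    · rintro _ ⟨U, hU, rfl⟩
      obtain ⟨n, -, hn⟩ := hu.toHasBasis.mem_iff.1 hU
      exact ⟨n, trivial, mul_subset_mul hn (Set.inv_subset_inv.2 hn)⟩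
    · intro n _
      exact ⟨u n * (u n)⁻¹, ⟨u n, hu.toHasBasis.mem_of_mem trivial, rfl⟩, subset_rfl⟩
  exact hb.isCountablyGenerated

end Aux

/-- A continuous bijective group homomorphism from `G` onto a second-countable
metrizable topological group. -/
structure ContinuousIsoOntoSecondCountableMetrizableGroup
    (G : Type*) [Group G] [TopologicalSpace G] where
  H : Type*
  [group : Group H]
  [top : TopologicalSpace H]
  secondCountable : SecondCountableTopology H
  metrizable : TopologicalSpace.MetrizableSpace H
  topologicalGroup : IsTopologicalGroup H
  φ : G →* H
  continuous : Continuous φ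
  bijective : Function.Bijective φ

universe uG uH

theorem exists_iso_of_aux {G : Type uG} [Group G] [t' : TopologicalSpace G] [IsTopologicalGroup G]
    [SecondCountableTopology G] [T0Space G] [TopologicalSpace.MetrizableSpace G] :
    ∀ tau : TopologicalSpace G, @Continuous G G tau t' id →
      Nonempty (@ContinuousIsoOntoSecondCountableMetrizableGroup.{uG, uH} G _ tau) := by
  obtain ⟨s, hsc, -, hsb⟩ := TopologicalSpace.exists_countable_basis G
  obtain ⟨v0, hv0, -, -⟩ := hsb.exists_subset_of_mem_open (Set.mem_univ (1 : G)) isOpen_univ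
  obtain ⟨b, rfl⟩ := hsc.exists_eq_range ⟨v0, hv0⟩
  set f : G → ULift.{uH} (ℕ → Prop) := fun x => ULift.up (fun n => x ∈ b n) with hf
  have key : ∀ x y : G, f x = f y → ∀ U : Set G, IsOpen U → x ∈ U → y ∈ U := by
    intro x y hxy U hU hx
    obtain ⟨w, hw, hxw, hwU⟩ := hsb.exists_subset_of_mem_open hx hU
    obtain ⟨n, rfl⟩ := hw
    have hn : (x ∈ b n) = (y ∈ b n) := congrFun (congrArg ULift.down hxy) n
    exact hwU (hn ▸ hxw)
  have hinj : Function.Injective f := fun x y hxy =>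
    (inseparable_iff_forall_isOpen.2 fun U hU =>
      ⟨fun h => key x y hxy U hU h, fun h => key y x hxy.symm U hU h⟩).eq
  let e : G ≃ Set.range f := Equiv.ofInjective f hinj
  letI grpH : Group (Set.range f) := e.symm.group
  let me : Set.range f ≃* G := e.symm.mulEquiv
  letI topH : TopologicalSpace (Set.range f) := TopologicalSpace.induced (⇑me) t'
  have hInd : Topology.IsInducing (⇑me) := ⟨rfl⟩
  have hEmb : Topology.IsEmbedding (⇑me) := ⟨hInd, me.injective⟩
  haveI tgH : IsTopologicalGroup (Set.range f) := hInd.topologicalGroup me.toMonoidHom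
  haveI scH : SecondCountableTopology (Set.range f) := hEmb.secondCountableTopology
  haveI metH : TopologicalSpace.MetrizableSpace (Set.range f) := hEmb.metrizableSpace
  intro tau hcont
  refine ⟨{ H := Set.range f, group := grpH, top := topH,
            secondCountable := scH, metrizable := metH, topologicalGroup := tgH,
            φ := me.symm.toMonoidHom, continuous := ?_, bijective := me.symm.bijective }⟩
  have h1 : (⇑me ∘ ⇑me.symm) = (id : G → G) := funext fun x => me.apply_symm_apply x
  exact continuous_induced_rng.2 (h1 ▸ hcont)

/-- Let `(G, τ)` be a Hausdorff separable SIN first-countable paratopological group.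
Then there exist a second-countable metrizable topological group `H` and a continuous
bijective group homomorphism from `G` onto `H`. -/
theorem hausdorff_separable_SIN_firstCountable_continuous_iso
    {G : Type*} [Group G] [TopologicalSpace G] [T2Space G] [ContinuousMul G]
    [TopologicalSpace.SeparableSpace G] [FirstCountableTopology G]
    (hSIN : ∀ U ∈ 𝓝 (1 : G), ∃ V ∈ 𝓝 (1 : G), ∀ x : G, ∀ v ∈ V, x * v * x⁻¹ ∈ U) :
    Nonempty (ContinuousIsoOntoSecondCountableMetrizableGroup G) := by
  classical
  have tg := (sinBasis hSIN).isTopologicalGroup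
  have t2' := sinBasis_t2 hSIN
  have cg := sinBasis_nhds_one_cg hSIN
  have contid := sinBasis_continuous_id hSIN
  have cgU : (@uniformity G
      (@IsTopologicalGroup.rightUniformSpace G _ (sinBasis hSIN).topology tg)).IsCountablyGenerated :=
    @Filter.comap.isCountablyGenerated (G × G) G (@nhds G (sinBasis hSIN).topology 1) cg
      (fun p : G × G => p.2 * p.1⁻¹)
  have hdr : @DenseRange G (sinBasis hSIN).topology G id := by
    show @Dense G (sinBasis hSIN).topology (Set.range id)
    rw [Set.range_id]
    exact @dense_univ G (sinBasis hSIN).topology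
  have sep' : @TopologicalSpace.SeparableSpace G (sinBasis hSIN).topology :=
    @DenseRange.separableSpace G G inferInstance inferInstance (sinBasis hSIN).topology id hdr contid
  have sc := @UniformSpace.secondCountable_of_separable G
    (@IsTopologicalGroup.rightUniformSpace G _ (sinBasis hSIN).topology tg) cgU sep'
  have t0' : @T0Space G (sinBasis hSIN).topology :=
    @T1Space.t0Space G (sinBasis hSIN).topology
      (@T2Space.t1Space G (sinBasis hSIN).topology t2')
  have met := @UniformSpace.metrizableSpace G
    (@IsTopologicalGroup.rightUniformSpace G _ (sinBasis hSIN).topology tg) cgU t0'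
  exact @exists_iso_of_aux G _ (sinBasis hSIN).topology tg sc t0' met ‹TopologicalSpace G› contid
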